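/- Fix d, κ ∈ ℕ with κ ≥ 1 and R > 0. Let φ = (φ_α)_{|α| ≤ 2κ} be a real sequence indexed by multi-indices of degree at most 2κ, with φ_0 = 1, such that the moment matrix M(φ) = (φ_{α+β})_{|α|,|β|≤κ} is PSD, and for each i ∈ [d] the localizing matrix of the ball constraint g_i(z) := R² − z_i², namely ( R²·φ_{α+β} − φ_{α+β+2e_i} )_{|α|,|β| ≤ κ−1}, is PSD. Then the diagonal moments satisfy φ_{2β} ≤ max(1, R²)^{|β|} for all |β| ≤ κ, and every entry of the moment matrix satisfies |φ_{α+β}| ≤ max(1, R)^{2κ} for |α|, |β| ≤ κ. In particular, the feasible set of the order-κ moment relaxation of a polynomial optimization problem whose constraints include R² − z_i² ≥ 0 for every variable is bounded. -/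

import Mathlib

private lemma psd_diag' {ι : Type*} [Fintype ι] [DecidableEq ι] {M : Matrix ι ι ℝ}
    (hM : M.PosSemidef) (a : ι) : 0 ≤ M a a := by
  have h := (hM.submatrix ![a]).dotProduct_mulVec_nonneg ![1]
  simpa [Matrix.mulVec, dotProduct, Fin.sum_univ_one] using h

private lemma psd_offdiag' {ι : Type*} [Fintype ι] [DecidableEq ι] {M : Matrix ι ι ℝ}
    (hM : M.PosSemidef) (a b : ι) (hsym : M a b = M b a) :
    M a b ^ 2 ≤ M a a * M b b := by
  have h := hM.submatrix ![a, b]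
  have hq : ∀ t : ℝ, 0 ≤ M a a * (t * t) + (M a b + M b a) * t + M b b := by
    intro t
    have h2 := h.dotProduct_mulVec_nonneg ![t, 1]
    simp [Matrix.mulVec, dotProduct, Fin.sum_univ_two, Matrix.submatrix_apply] at h2
    ring_nf at h2 ⊢
    linarith
  have hd := discrim_le_zero hq
  rw [discrim] at hd
  rw [← hsym] at hd
  nlinarith [hd]

private lemma stmt15_entry (d κ : ℕ) (φ : (Fin d → ℕ) → ℝ)
    (hM : Matrix.PosSemidef
      (Matrix.of fun a b : {α : Fin d → Fin (κ + 1) // ∑ i, (α i : ℕ) ≤ κ} =>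
        φ fun i => (a.1 i : ℕ) + (b.1 i : ℕ)))
    (α β : Fin d → ℕ) (hα : ∑ i, α i ≤ κ) (hβ : ∑ i, β i ≤ κ) :
    0 ≤ φ (fun i => α i + α i) ∧
    φ (fun i => α i + β i) ^ 2 ≤ φ (fun i => α i + α i) * φ (fun i => β i + β i) := by
  have hlift : ∀ (γ : Fin d → ℕ), ∑ i, γ i ≤ κ → ∀ i, γ i < κ + 1 := fun γ hγ i =>
    Nat.lt_succ_of_le ((Finset.single_le_sum (fun j _ => Nat.zero_le (γ j))
      (Finset.mem_univ i)).trans hγ)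
  set a : {α : Fin d → Fin (κ + 1) // ∑ i, (α i : ℕ) ≤ κ} :=
    ⟨fun i => ⟨α i, hlift α hα i⟩, by simpa using hα⟩ with ha
  set b : {α : Fin d → Fin (κ + 1) // ∑ i, (α i : ℕ) ≤ κ} :=
    ⟨fun i => ⟨β i, hlift β hβ i⟩, by simpa using hβ⟩ with hb
  have hsym : (Matrix.of fun a b : {α : Fin d → Fin (κ + 1) // ∑ i, (α i : ℕ) ≤ κ} =>
      φ fun i => (a.1 i : ℕ) + (b.1 i : ℕ)) a b =
      (Matrix.of fun a b : {α : Fin d → Fin (κ + 1) // ∑ i, (α i : ℕ) ≤ κ} =>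
      φ fun i => (a.1 i : ℕ) + (b.1 i : ℕ)) b a := by
    simp only [Matrix.of_apply]
    congr 1
    funext i
    exact Nat.add_comm _ _
  refine ⟨?_, ?_⟩
  · simpa using psd_diag' hM a
  · simpa using psd_offdiag' hM a b hsym

private lemma stmt15_loc (d κ : ℕ) (R : ℝ) (φ : (Fin d → ℕ) → ℝ) (i0 : Fin d)
    (hL : Matrix.PosSemidef
      (Matrix.of fun a b : {α : Fin d → Fin (κ - 1 + 1) // ∑ i, (α i : ℕ) ≤ κ - 1} =>
        R ^ 2 * φ (fun i => (a.1 i : ℕ) + (b.1 i : ℕ)) -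
          φ ((fun i => (a.1 i : ℕ) + (b.1 i : ℕ)) + Pi.single i0 2)))
    (β : Fin d → ℕ) (hβ : ∑ i, β i ≤ κ - 1) :
    φ ((fun i => β i + β i) + Pi.single i0 2) ≤ R ^ 2 * φ (fun i => β i + β i) := by
  have hlift : ∀ i, β i < κ - 1 + 1 := fun i =>
    Nat.lt_succ_of_le ((Finset.single_le_sum (fun j _ => Nat.zero_le (β j))
      (Finset.mem_univ i)).trans hβ)
  set a : {α : Fin d → Fin (κ - 1 + 1) // ∑ i, (α i : ℕ) ≤ κ - 1} :=
    ⟨fun i => ⟨β i, hlift i⟩, by simpa using hβ⟩ with ha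
  have h := psd_diag' hL a
  simp only [Matrix.of_apply, ha] at h
  linarith [h]

/-- **Ball constraints bound the moments.**
Let `φ` be a truncated moment sequence (represented as a function on multi-indices) with
`φ_0 = 1`, PSD order-`κ` moment matrix `(φ_{α+β})_{|α|,|β|≤κ}`, and, for each variable
`z_i`, PSD localizing matrix `(R²·φ_{α+β} − φ_{α+β+2e_i})_{|α|,|β|≤κ−1}` of the ball
constraint `R² − z_i² ≥ 0`.  Then the diagonal moments satisfy
`φ_{2β} ≤ max(1, R²)^{|β|}` for `|β| ≤ κ`, and every entry of the moment matrix satisfies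
`|φ_{α+β}| ≤ max(1, R)^{2κ}` for `|α|, |β| ≤ κ`. -/
theorem stmt_15 (d κ : ℕ) (hκ : 1 ≤ κ) (R : ℝ) (hR : 0 < R)
    (φ : (Fin d → ℕ) → ℝ) (h0 : φ 0 = 1)
    (hM : Matrix.PosSemidef
      (Matrix.of fun a b : {α : Fin d → Fin (κ + 1) // ∑ i, (α i : ℕ) ≤ κ} =>
        φ fun i => (a.1 i : ℕ) + (b.1 i : ℕ)))
    (hL : ∀ i0 : Fin d, Matrix.PosSemidef
      (Matrix.of fun a b : {α : Fin d → Fin (κ - 1 + 1) // ∑ i, (α i : ℕ) ≤ κ - 1} =>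
        R ^ 2 * φ (fun i => (a.1 i : ℕ) + (b.1 i : ℕ)) -
          φ ((fun i => (a.1 i : ℕ) + (b.1 i : ℕ)) + Pi.single i0 2))) :
    (∀ β : Fin d → ℕ, ∑ i, β i ≤ κ →
      φ (fun i => 2 * β i) ≤ max 1 (R ^ 2) ^ (∑ i, β i)) ∧
    ∀ α β : Fin d → ℕ, ∑ i, α i ≤ κ → ∑ i, β i ≤ κ →
      |φ (α + β)| ≤ max 1 R ^ (2 * κ) := by
  classical
  have hm1 : (1:ℝ) ≤ max 1 (R ^ 2) := le_max_left _ _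
  have hm0 : (0:ℝ) ≤ max 1 (R ^ 2) := zero_le_one.trans hm1
  have hdiag : ∀ n, n ≤ κ → ∀ β : Fin d → ℕ, ∑ i, β i = n →
      φ (fun i => β i + β i) ≤ max 1 (R ^ 2) ^ n := by
    intro n
    induction n with
    | zero =>
      intro _ β hβ
      have hb : ∀ i, β i = 0 := fun i =>
        (Finset.sum_eq_zero_iff.mp hβ) i (Finset.mem_univ i)
      have he : (fun i => β i + β i) = (0 : Fin d → ℕ) := funext fun i => by simp [hb i]
      rw [he, h0]
      simp
    | succ n ih =>
      intro hn β hβ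
      have hex : ∃ i0, 0 < β i0 := by
        by_contra hc
        push_neg at hc
        have : ∑ i, β i = 0 := Finset.sum_eq_zero fun i _ => Nat.le_zero.mp (hc i)
        omega
      obtain ⟨i0, hi0⟩ := hex
      set β' := Function.update β i0 (β i0 - 1) with hβ'
      have hsum' : ∑ i, β' i = n := by
        have h1 : ∑ i, β' i = (β i0 - 1) + ∑ x ∈ Finset.univ \ {i0}, β x := by
          rw [hβ', Finset.sum_update_of_mem (Finset.mem_univ i0)]
        have h2 : β i0 + ∑ i ∈ Finset.univ.erase i0, β i = ∑ i, β i :=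
          Finset.add_sum_erase _ _ (Finset.mem_univ i0)
        rw [Finset.erase_eq] at h2
        omega
      have hloc := stmt15_loc d κ R φ i0 (hL i0) β' (by omega)
      have heq : ((fun i => β' i + β' i) + Pi.single i0 2) = (fun i => β i + β i) := by
        funext i
        simp only [Pi.add_apply, Pi.single_apply, hβ', Function.update_apply]
        by_cases h : i = i0
        · simp only [h, if_true, if_pos rfl]
          omega
        · simp [h]
      rw [heq] at hloc
      have hnn' : 0 ≤ φ (fun i => β' i + β' i) :=
        (stmt15_entry d κ φ hM β' β' (by omega) (by omega)).1
      have hih := ih (by omega) β' hsum'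
      calc φ (fun i => β i + β i) ≤ R ^ 2 * φ (fun i => β' i + β' i) := hloc
        _ ≤ max 1 (R ^ 2) * max 1 (R ^ 2) ^ n :=
            mul_le_mul (le_max_right _ _) hih hnn' hm0
        _ = max 1 (R ^ 2) ^ (n + 1) := by rw [pow_succ]; ring
  constructor
  · intro β hβ
    have he : (fun i => 2 * β i) = (fun i => β i + β i) := funext fun i => by ring
    rw [he]
    exact hdiag _ hβ β rfl
  · intro α β hα hβ
    have h2 := (stmt15_entry d κ φ hM α β hα hβ).2
    have ha := hdiag _ hα α rfl
    have hb := hdiag _ hβ β rfl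
    have hnnb : 0 ≤ φ (fun i => β i + β i) := (stmt15_entry d κ φ hM β β hβ hβ).1
    have hbound : φ (fun i => α i + β i) ^ 2 ≤ max 1 (R ^ 2) ^ κ * max 1 (R ^ 2) ^ κ := by
      calc φ (fun i => α i + β i) ^ 2
          ≤ φ (fun i => α i + α i) * φ (fun i => β i + β i) := h2
        _ ≤ max 1 (R ^ 2) ^ (∑ i, α i) * max 1 (R ^ 2) ^ (∑ i, β i) :=
            mul_le_mul ha hb hnnb (pow_nonneg hm0 _)
        _ ≤ max 1 (R ^ 2) ^ κ * max 1 (R ^ 2) ^ κ :=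
            mul_le_mul (pow_le_pow_right₀ hm1 hα) (pow_le_pow_right₀ hm1 hβ)
              (pow_nonneg hm0 _) (pow_nonneg hm0 _)
    have hmsq : max 1 (R ^ 2) = max 1 R ^ 2 := by
      rcases le_total R 1 with h | h
      · rw [max_eq_left h, max_eq_left (by nlinarith), one_pow]
      · rw [max_eq_right h, max_eq_right (by nlinarith)]
    have hkey : max 1 (R ^ 2) ^ κ = max 1 R ^ (2 * κ) := by
      rw [hmsq, ← pow_mul, Nat.mul_comm]
    rw [hkey] at hbound
    have hab : φ (α + β) = φ (fun i => α i + β i) := rfl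
    rw [hab]
    have hpos : (0:ℝ) ≤ max 1 R ^ (2 * κ) :=
      pow_nonneg (le_trans zero_le_one (le_max_left _ _)) _
    nlinarith [abs_nonneg (φ (fun i => α i + β i)), sq_abs (φ (fun i => α i + β i)), hbound]
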